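/- Let G be a finite simple graph in which every vertex has positive degree, and let x, y be adjacent vertices with N(x) \ {y} = N(y) \ {x} (connected twins) and common degree d = d_x = d_y. If λ is an eigenvalue of the normalized Laplacian L with λ ≠ (d+1)/d and w is any eigenvector of L with eigenvalue λ, then the edge-derivative expression satisfies F(w, λ, {x,y}) ≤ 0. -/

import Mathlib

open Finset Matrix

variable {V : Type*} [Fintype V] [DecidableEq V]

/-- The normalized Laplacian `L = I - D^{-1/2} A D^{-1/2}` of a simple graph. -/
noncomputable def normLap (G : SimpleGraph V) [DecidableRel G.Adj] : Matrix V V ℝ :=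
  fun x y =>
    if x = y then 1
    else if G.Adj x y then -(1 / Real.sqrt ((G.degree x : ℝ) * (G.degree y : ℝ)))
    else 0

/-- The Aksoy–Purvine–Young edge-derivative expression
`F(v, λ, {x,y}) = (1-λ)(v_x²/d_x + v_y²/d_y) − 2 v_x v_y / √(d_x d_y)`. -/
noncomputable def edgeDeriv (G : SimpleGraph V) [DecidableRel G.Adj]
    (v : V → ℝ) (lam : ℝ) (x y : V) : ℝ :=
  (1 - lam) * (v x ^ 2 / (G.degree x : ℝ) + v y ^ 2 / (G.degree y : ℝ))
    - 2 * (v x * v y) / Real.sqrt ((G.degree x : ℝ) * (G.degree y : ℝ))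

lemma normLap_eq_conj (G : SimpleGraph V) [DecidableRel G.Adj]
    (hdeg : ∀ z : V, 0 < G.degree z) :
    normLap G = Matrix.diagonal (fun z => (Real.sqrt (G.degree z))⁻¹) * G.lapMatrix ℝ *
      Matrix.diagonal (fun z => (Real.sqrt (G.degree z))⁻¹) := by
  ext a b
  rw [Matrix.mul_diagonal, Matrix.diagonal_mul]
  have hda : (0 : ℝ) < (G.degree a : ℝ) := by exact_mod_cast hdeg a
  have hdb : (0 : ℝ) < (G.degree b : ℝ) := by exact_mod_cast hdeg b
  simp only [normLap, SimpleGraph.lapMatrix, Matrix.sub_apply, SimpleGraph.degMatrix,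
    Matrix.diagonal_apply, SimpleGraph.adjMatrix_apply]
  by_cases hab : a = b
  · subst hab
    have hs : (0:ℝ) < Real.sqrt (G.degree a) := Real.sqrt_pos.2 hda
    simp [SimpleGraph.irrefl]
    have hre : ((Real.sqrt (G.degree a))⁻¹ * ((G.degree a) : ℝ) * (Real.sqrt (G.degree a))⁻¹)
        = (Real.sqrt (G.degree a) * Real.sqrt (G.degree a))⁻¹ * ((G.degree a) : ℝ) := by ring
    rw [hre, Real.mul_self_sqrt hda.le, inv_mul_cancel₀ hda.ne']
  · by_cases hadj : G.Adj a b
    · simp [hab, hadj, Real.sqrt_mul hda.le, mul_inv]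
      ring
    · simp [hab, hadj]

lemma normLap_posSemidef (G : SimpleGraph V) [DecidableRel G.Adj]
    (hdeg : ∀ z : V, 0 < G.degree z) : (normLap G).PosSemidef := by
  rw [normLap_eq_conj G hdeg]
  have h : (Matrix.diagonal (fun z : V => (Real.sqrt (G.degree z))⁻¹))ᴴ =
      Matrix.diagonal (fun z : V => (Real.sqrt (G.degree z))⁻¹) := by
    rw [Matrix.diagonal_conjTranspose]
    congr
  have h2 := (SimpleGraph.posSemidef_lapMatrix ℝ G).mul_mul_conjTranspose_same
    (Matrix.diagonal (fun z : V => (Real.sqrt (G.degree z))⁻¹))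
  rwa [h] at h2

lemma normLap_mulVec (G : SimpleGraph V) [DecidableRel G.Adj] (w : V → ℝ) (a : V) :
    (normLap G *ᵥ w) a = w a - ∑ z ∈ G.neighborFinset a,
      w z / Real.sqrt ((G.degree a : ℝ) * (G.degree z : ℝ)) := by
  have haU : a ∈ (Finset.univ : Finset V) := Finset.mem_univ a
  rw [Matrix.mulVec, dotProduct,
    ← Finset.sum_erase_add _ _ haU]
  have h1 : normLap G a a * w a = w a := by simp [normLap]
  rw [h1]
  have hsub : G.neighborFinset a ⊆ (Finset.univ : Finset V).erase a := by
    intro z hz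
    rw [SimpleGraph.mem_neighborFinset] at hz
    exact Finset.mem_erase.2 ⟨(G.ne_of_adj hz).symm, Finset.mem_univ z⟩
  have h2 : ∑ z ∈ (Finset.univ : Finset V).erase a, normLap G a z * w z =
      ∑ z ∈ G.neighborFinset a,
        -(w z / Real.sqrt ((G.degree a : ℝ) * (G.degree z : ℝ))) := by
    rw [← Finset.sum_subset hsub]
    · apply Finset.sum_congr rfl
      intro z hz
      rw [SimpleGraph.mem_neighborFinset] at hz
      simp [normLap, (G.ne_of_adj hz), hz]
      ring
    · intro z hz hzn
      rw [SimpleGraph.mem_neighborFinset] at hzn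
      have : a ≠ z := (Finset.mem_erase.1 hz).1.symm
      simp [normLap, this, hzn]
  rw [h2, Finset.sum_neg_distrib]
  ring

theorem connected_twins_other_eigenvalues_nonpositive
    (G : SimpleGraph V) [DecidableRel G.Adj]
    (hdeg : ∀ z : V, 0 < G.degree z)
    (x y : V) (hxy : G.Adj x y)
    (htwin : G.neighborFinset x \ {y} = G.neighborFinset y \ {x})
    (d : ℕ) (hdx : G.degree x = d) (hdy : G.degree y = d)
    (lam : ℝ) (hlam : lam ≠ ((d : ℝ) + 1) / d)
    (w : V → ℝ) (hw0 : w ≠ 0)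
    (heig : (normLap G).mulVec w = lam • w) :
    edgeDeriv G w lam x y ≤ 0 := by
  have hd : (0 : ℝ) < (d : ℝ) := by
    have := hdeg x; rw [hdx] at this; exact_mod_cast this
  have hsd : Real.sqrt ((d : ℝ) * (d : ℝ)) = (d : ℝ) := Real.sqrt_mul_self hd.le
  -- λ ≥ 0
  have hpsd := normLap_posSemidef G hdeg
  have hWWdef : w ⬝ᵥ w = ∑ i, w i * w i := rfl
  have hWW : (0 : ℝ) < w ⬝ᵥ w := by
    rcases Function.ne_iff.1 hw0 with ⟨i, hi⟩
    rw [hWWdef]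
    have hle : w i * w i ≤ ∑ z, w z * w z := by
      apply Finset.single_le_sum (f := fun z => w z * w z)
      · intro z _; exact mul_self_nonneg _
      · exact Finset.mem_univ i
    have hpos : (0 : ℝ) < w i * w i := mul_self_pos.2 (by simpa using hi)
    linarith
  have hlam0 : 0 ≤ lam := by
    have h2 := hpsd.dotProduct_mulVec_nonneg w
    rw [heig] at h2
    simp only [star_trivial, dotProduct_smul, smul_eq_mul] at h2
    nlinarith [h2, hWW]
  -- w x = w y
  have hyN : y ∈ G.neighborFinset x := (SimpleGraph.mem_neighborFinset G x y).2 hxy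
  have hxN : x ∈ G.neighborFinset y := (SimpleGraph.mem_neighborFinset G y x).2 hxy.symm
  set t : V → ℝ := fun z => w z / Real.sqrt ((d : ℝ) * (G.degree z : ℝ)) with ht
  set A : Finset V := G.neighborFinset x \ {y} with hA
  have hyA : y ∉ A := by simp [hA]
  have hxA : x ∉ A := by
    simp [hA, SimpleGraph.mem_neighborFinset]
  have hNx : G.neighborFinset x = insert y A := by
    rw [hA, Finset.sdiff_singleton_eq_erase, Finset.insert_erase hyN]
  have hNy : G.neighborFinset y = insert x A := by
    rw [htwin, Finset.sdiff_singleton_eq_erase, Finset.insert_erase hxN]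
  have heigx := congrFun heig x
  have heigy := congrFun heig y
  rw [normLap_mulVec] at heigx heigy
  rw [hdx] at heigx
  rw [hdy] at heigy
  simp only [Pi.smul_apply, smul_eq_mul] at heigx heigy
  rw [hNx, Finset.sum_insert hyA] at heigx
  rw [hNy, Finset.sum_insert hxA] at heigy
  have htx : w x / Real.sqrt ((d : ℝ) * (G.degree x : ℝ)) = w x / d := by
    rw [hdx, hsd]
  have hty : w y / Real.sqrt ((d : ℝ) * (G.degree y : ℝ)) = w y / d := by
    rw [hdy, hsd]
  rw [hty] at heigx
  rw [htx] at heigy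
  have hkey : lam * (w x - w y) = (w x - w y) * (((d : ℝ) + 1) / d) := by
    have := sub_eq_sub_iff_sub_eq_sub.1 (congrArg₂ Sub.sub heigx heigy)
    field_simp at heigx heigy ⊢
    nlinarith [heigx, heigy]
  have hwxy : w x = w y := by
    by_contra hne
    apply hlam
    have h3 : w x - w y ≠ 0 := sub_ne_zero.2 hne
    field_simp at hkey
    have h5 : (w x - w y) * (lam * (d:ℝ)) = (w x - w y) * ((d:ℝ) + 1) := by
      rw [hkey]
    have h4 : lam * (d:ℝ) = (d:ℝ) + 1 := mul_left_cancel₀ h3 h5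
    rw [eq_div_iff hd.ne']
    linarith
  -- conclude
  rw [edgeDeriv, hdx, hdy, hsd, ← hwxy]
  have hrw : (1 - lam) * (w x ^ 2 / (d:ℝ) + w x ^ 2 / (d:ℝ)) - 2 * (w x * w x) / (d:ℝ)
      = -(lam * (2 * w x ^ 2) / (d:ℝ)) := by
    field_simp
    ring
  rw [hrw]
  have : 0 ≤ lam * (2 * w x ^ 2) / (d:ℝ) :=
    div_nonneg (mul_nonneg hlam0 (by positivity)) hd.le
  linarith
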